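/- Let y2 = 3√2 − 1 and define Ỹ : [−1, y2] → ℝ by Ỹ(y) = −(1/6)(y+1)²(y−2) for −1 ≤ y ≤ 2 and Ỹ(y) = (1/6)(y−2)(y−y2)(y+2+y2) for 2 ≤ y ≤ y2. Then: Ỹ(−1) = 0 and Ỹ'(−1) = 0; Ỹ > 0 on (−1, 2) and Ỹ < 0 on (2, y2); Ỹ''(y) = −y for all y ∈ (−1, 2) and Ỹ''(y) = y for all y ∈ (2, y2); and the two pieces match in a C¹ fashion at y = 2, both one-sided derivatives there being equal to −3/2. Hence Ỹ is a C¹ function on [−1, y2] satisfying Ỹ'' + sign(Ỹ)·y = 0 wherever Ỹ ≠ 0, with first zeros y_1 = 2 and y_2 = 3√2 − 1 after the interface at −1. -/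

import Mathlib

noncomputable def fL : ℝ → ℝ := fun y => -(1/6 : ℝ) * (y + 1) ^ 2 * (y - 2)
noncomputable def gR : ℝ → ℝ := fun y =>
  (1/6 : ℝ) * (y - 2) * (y - (3 * Real.sqrt 2 - 1)) * (y + 2 + (3 * Real.sqrt 2 - 1))
noncomputable def YtF : ℝ → ℝ := fun y => if y ≤ 2 then fL y else gR y
noncomputable def FD : ℝ → ℝ := fun y => if y ≤ 2 then -(1/2 : ℝ) * (y ^ 2 - 1) else (y ^ 2 - 7) / 2

lemma hs2 : Real.sqrt 2 ^ 2 = 2 := Real.sq_sqrt (by norm_num)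

lemma sqrt2_gt_one : (1 : ℝ) < Real.sqrt 2 := by
  nlinarith [hs2, Real.sqrt_nonneg 2]

lemma hfL (y : ℝ) : HasDerivAt fL (-(1/2) * (y ^ 2 - 1)) y := by
  have h := ((((hasDerivAt_id y).add_const 1).pow 2).const_mul (-(1/6) : ℝ)).mul
    ((hasDerivAt_id y).sub_const 2)
  simp only [id_eq] at h
  refine h.congr_deriv ?_
  simp only [Pi.pow_apply, Pi.mul_apply]
  push_cast
  ring

lemma hgR (y : ℝ) : HasDerivAt gR ((y ^ 2 - 7) / 2) y := by
  have h := ((((hasDerivAt_id y).sub_const 2).const_mul (1/6 : ℝ)).mul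
      ((hasDerivAt_id y).sub_const (3 * Real.sqrt 2 - 1))).mul
      ((hasDerivAt_id y).add_const (2 + (3 * Real.sqrt 2 - 1)))
  simp only [id_eq] at h
  have he : ∀ z : ℝ, gR z = 1/6 * (z - 2) * (z - (3 * Real.sqrt 2 - 1)) * (z + (2 + (3 * Real.sqrt 2 - 1))) := by
    intro z; unfold gR; ring
  rw [show gR = fun z => 1/6 * (z - 2) * (z - (3 * Real.sqrt 2 - 1)) * (z + (2 + (3 * Real.sqrt 2 - 1))) from funext he]
  refine h.congr_deriv ?_
  simp only [Pi.pow_apply, Pi.mul_apply]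
  linear_combination (-3/2 : ℝ) * hs2

lemma fL2 : fL 2 = 0 := by unfold fL; ring
lemma gR2 : gR 2 = 0 := by unfold gR; ring

lemma YtF_eqOn_left : ∀ x ∈ Set.Iic (2 : ℝ), YtF x = fL x := fun x hx => if_pos hx

lemma YtF_eqOn_right : ∀ x ∈ Set.Ici (2 : ℝ), YtF x = gR x := by
  intro x hx
  rcases eq_or_lt_of_le (Set.mem_Ici.1 hx) with h | h
  · rw [← h]; show YtF 2 = gR 2; rw [gR2]; simpa [YtF, fL2] using fL2
  · exact if_neg (not_le.2 h)

lemma hW_le : HasDerivWithinAt YtF (-(3/2)) (Set.Iic 2) 2 := by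
  have h := (hfL 2).hasDerivWithinAt (s := Set.Iic 2)
  have h' : HasDerivWithinAt fL (-(3/2)) (Set.Iic 2) 2 := by refine h.congr_deriv ?_; norm_num
  exact h'.congr YtF_eqOn_left (YtF_eqOn_left 2 (Set.mem_Iic.2 le_rfl))

lemma hW_ge : HasDerivWithinAt YtF (-(3/2)) (Set.Ici 2) 2 := by
  have h := (hgR 2).hasDerivWithinAt (s := Set.Ici 2)
  have h' : HasDerivWithinAt gR (-(3/2)) (Set.Ici 2) 2 := by refine h.congr_deriv ?_; norm_num
  exact h'.congr YtF_eqOn_right (YtF_eqOn_right 2 (Set.mem_Ici.2 le_rfl))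

lemma evL {y : ℝ} (hy : y < 2) : YtF =ᶠ[nhds y] fL :=
  Filter.eventuallyEq_of_mem (Iio_mem_nhds hy) (fun z hz => if_pos (le_of_lt hz))

lemma evR {y : ℝ} (hy : 2 < y) : YtF =ᶠ[nhds y] gR :=
  Filter.eventuallyEq_of_mem (Ioi_mem_nhds hy) (fun z hz => if_neg (not_le.2 hz))

lemma hD (y : ℝ) : HasDerivAt YtF (FD y) y := by
  rcases lt_trichotomy y 2 with h | h | h
  · have := (hfL y).congr_of_eventuallyEq (evL h)
    simpa [FD, h.le] using this
  · subst h
    have := (hW_le.union hW_ge)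
    rw [Set.Iic_union_Ici, hasDerivWithinAt_univ] at this
    have hF : FD 2 = -(3/2) := by norm_num [FD]
    rw [hF]; exact this
  · have := (hgR y).congr_of_eventuallyEq (evR h)
    simpa [FD, not_le.2 h] using this

lemma hderiv : deriv YtF = FD := funext fun y => (hD y).deriv

lemma hFDcont : Continuous FD := by
  unfold FD
  apply Continuous.if_le (by continuity) (by continuity) continuous_id continuous_const
  intro x hx; subst hx; norm_num

lemma hC1 : ContDiff ℝ 1 YtF :=
  contDiff_one_iff_deriv.2 ⟨fun y => (hD y).differentiableAt, hderiv ▸ hFDcont⟩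

lemma hD2L {y : ℝ} (hy : y < 2) : deriv FD y = -y := by
  have hev : FD =ᶠ[nhds y] fun z => -(1/2 : ℝ) * (z ^ 2 - 1) :=
    Filter.eventuallyEq_of_mem (Iio_mem_nhds hy) (fun z hz => if_pos (le_of_lt hz))
  rw [hev.deriv_eq]
  have h := (((hasDerivAt_id y).pow 2).sub_const 1).const_mul (-(1/2) : ℝ)
  simp only [id_eq] at h
  have h' : HasDerivAt (fun z : ℝ => -(1/2 : ℝ) * (z ^ 2 - 1)) (-y) y := by
    refine h.congr_deriv ?_; push_cast; ring
  exact h'.deriv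

lemma hD2R {y : ℝ} (hy : 2 < y) : deriv FD y = y := by
  have hev : FD =ᶠ[nhds y] fun z => (z ^ 2 - 7) / 2 :=
    Filter.eventuallyEq_of_mem (Ioi_mem_nhds hy) (fun z hz => if_neg (not_le.2 hz))
  rw [hev.deriv_eq]
  have h := (((hasDerivAt_id y).pow 2).sub_const 7).div_const 2
  simp only [id_eq] at h
  have h' : HasDerivAt (fun z : ℝ => (z ^ 2 - 7) / 2) y y := by
    refine h.congr_deriv ?_; push_cast; ring
  exact h'.deriv

/-- Verification of the first two arcs of the limit
(`n = +∞`) first nonlinear eigenfunction: with `y₂ = 3√2 - 1` and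
`Ỹ(y) = -(1/6)(y+1)²(y-2)` for `y ≤ 2`, `Ỹ(y) = (1/6)(y-2)(y-y₂)(y+2+y₂)`
for `y ≥ 2`, one has `Ỹ(-1) = Ỹ'(-1) = 0`, `Ỹ > 0` on `(-1,2)`, `Ỹ < 0` on
`(2,y₂)`, `Ỹ'' = -y` on `(-1,2)`, `Ỹ'' = y` on `(2,y₂)`, both one-sided
derivatives at `2` equal `-3/2`, `Ỹ` is C¹ on `[-1, y₂]`, and
`Ỹ'' + sign(Ỹ)·y = 0` wherever `Ỹ ≠ 0` on `(-1, y₂)`. -/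
theorem stmt12 :
    let y₂ : ℝ := 3 * Real.sqrt 2 - 1
    let Yt : ℝ → ℝ := fun y =>
      if y ≤ 2 then -(1 / 6) * (y + 1) ^ 2 * (y - 2)
      else (1 / 6) * (y - 2) * (y - y₂) * (y + 2 + y₂)
    Yt (-1) = 0 ∧
    deriv Yt (-1) = 0 ∧
    (∀ y ∈ Set.Ioo (-1 : ℝ) 2, 0 < Yt y) ∧
    (∀ y ∈ Set.Ioo (2 : ℝ) y₂, Yt y < 0) ∧
    (∀ y ∈ Set.Ioo (-1 : ℝ) 2, deriv (deriv Yt) y = -y) ∧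
    (∀ y ∈ Set.Ioo (2 : ℝ) y₂, deriv (deriv Yt) y = y) ∧
    HasDerivWithinAt Yt (-(3 / 2)) (Set.Iic 2) 2 ∧
    HasDerivWithinAt Yt (-(3 / 2)) (Set.Ici 2) 2 ∧
    ContDiffOn ℝ 1 Yt (Set.Icc (-1 : ℝ) y₂) ∧
    Yt 2 = 0 ∧
    Yt y₂ = 0 ∧
    (∀ y ∈ Set.Ioo (-1 : ℝ) y₂, Yt y ≠ 0 →
      deriv (deriv Yt) y + Real.sign (Yt y) * y = 0) := by
  intro y₂ Yt
  have hYt : Yt = YtF := rfl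
  rw [hYt]
  have hy2gt : (2 : ℝ) < y₂ := by
    have := sqrt2_gt_one; simp only [y₂]; linarith
  have hpos : ∀ y ∈ Set.Ioo (-1 : ℝ) 2, 0 < YtF y := by
    intro y hy
    rw [show YtF y = fL y from if_pos hy.2.le]
    unfold fL
    have h1 : 0 < (y + 1) ^ 2 := pow_pos (by linarith [hy.1]) 2
    have h2 : 0 < 2 - y := by linarith [hy.2]
    nlinarith [mul_pos h1 h2]
  have hneg : ∀ y ∈ Set.Ioo (2 : ℝ) y₂, YtF y < 0 := by
    intro y hy
    rw [show YtF y = gR y from if_neg (not_le.2 hy.1)]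
    have hA : 0 < (1/6 : ℝ) * (y - 2) := by nlinarith [hy.1]
    have hB : y - (3 * Real.sqrt 2 - 1) < 0 := by
      have := hy.2; simp only [y₂] at this; linarith
    have hC : 0 < y + 2 + (3 * Real.sqrt 2 - 1) := by nlinarith [hy.1, sqrt2_gt_one]
    exact mul_neg_of_neg_of_pos (mul_neg_of_pos_of_neg hA hB) hC
  have hdd : deriv (deriv YtF) = deriv FD := by rw [hderiv]
  have hddL : ∀ y ∈ Set.Ioo (-1 : ℝ) 2, deriv (deriv YtF) y = -y := by
    intro y hy; rw [hdd, hD2L hy.2]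
  have hddR : ∀ y ∈ Set.Ioo (2 : ℝ) y₂, deriv (deriv YtF) y = y := by
    intro y hy; rw [hdd, hD2R hy.1]
  have hYt2 : YtF 2 = 0 := by
    rw [show YtF 2 = fL 2 from if_pos le_rfl, fL2]
  have hYty2 : YtF y₂ = 0 := by
    rw [show YtF y₂ = gR y₂ from if_neg (not_le.2 hy2gt)]
    unfold gR; simp only [y₂]; ring
  refine ⟨?_, ?_, hpos, hneg, hddL, hddR, hW_le, hW_ge, hC1.contDiffOn, hYt2, hYty2, ?_⟩
  · rw [show YtF (-1) = fL (-1) from if_pos (by norm_num), fL]; norm_num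
  · rw [hderiv]
    simp only [FD, if_pos (by norm_num : (-1:ℝ) ≤ 2)]
    norm_num
  · intro y hy hne
    rcases lt_trichotomy y 2 with h | h | h
    · have hp := hpos y ⟨hy.1, h⟩
      rw [hddL y ⟨hy.1, h⟩, Real.sign_of_pos hp]
      ring
    · exact absurd (h ▸ hYt2) hne
    · have hn := hneg y ⟨h, hy.2⟩
      rw [hddR y ⟨h, hy.2⟩, Real.sign_of_neg hn]
      ring
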